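/- Let A, B ∈ L(H,K) with A, B having closed range. Then A ≤◇ B in the diamond order if and only if A† ≤⁻ B† in the minus order, where † denotes the (bounded) Moore-Penrose inverse. -/

import Mathlib

open ContinuousLinearMap

/-- The orthogonal projection onto the closure of the range of `A`. -/
noncomputable def projCR {E F : Type*} [NormedAddCommGroup E] [InnerProductSpace ℂ E]
    [NormedAddCommGroup F] [InnerProductSpace ℂ F] [CompleteSpace F]
    (A : E →L[ℂ] F) : F →L[ℂ] F :=
  (LinearMap.range (A : E →ₗ[ℂ] F)).topologicalClosure.subtypeL ∘L
    Submodule.orthogonalProjectionOnto (LinearMap.range (A : E →ₗ[ℂ] F)).topologicalClosure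

/-- `Td` is the (bounded) Moore-Penrose inverse of `T`: `T Td = P_T`, `Td T = P_{T*}`,
and `Td T Td = Td`. -/
def IsMPInv {E F : Type*} [NormedAddCommGroup E] [InnerProductSpace ℂ E] [CompleteSpace E]
    [NormedAddCommGroup F] [InnerProductSpace ℂ F] [CompleteSpace F]
    (T : E →L[ℂ] F) (Td : F →L[ℂ] E) : Prop :=
  T ∘L Td = projCR T ∧ Td ∘L T = projCR (adjoint T) ∧ Td ∘L (T ∘L Td) = Td

section Aux
variable {E E' F : Type*} [NormedAddCommGroup E] [InnerProductSpace ℂ E]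
  [NormedAddCommGroup E'] [InnerProductSpace ℂ E']
  [NormedAddCommGroup F] [InnerProductSpace ℂ F] [CompleteSpace F]

lemma projCR_apply_mem (T : E →L[ℂ] F) (x : F) :
    projCR T x ∈ (LinearMap.range (T : E →ₗ[ℂ] F)).topologicalClosure :=
  (Submodule.orthogonalProjectionOnto _ x).2

lemma projCR_apply_of_mem (T : E →L[ℂ] F) {x : F}
    (hx : x ∈ (LinearMap.range (T : E →ₗ[ℂ] F)).topologicalClosure) : projCR T x = x :=
  Submodule.starProjection_eq_self_iff.mpr hx

lemma projCR_comp (T : E →L[ℂ] F) : projCR T ∘L T = T :=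
  ext fun x => projCR_apply_of_mem _
    (Submodule.le_topologicalClosure _ (LinearMap.mem_range_self _ x))

lemma projCR_comp_projCR {T : E →L[ℂ] F} {S : E' →L[ℂ] F}
    (h : LinearMap.range (T : E →ₗ[ℂ] F) ≤ LinearMap.range (S : E' →ₗ[ℂ] F)) : projCR S ∘L projCR T = projCR T :=
  ext fun x => projCR_apply_of_mem _
    (Submodule.topologicalClosure_mono h (projCR_apply_mem T x))

lemma projCR_adjoint [CompleteSpace E] (T : E →L[ℂ] F) : adjoint (projCR T) = projCR T :=
  (isSelfAdjoint_starProjection (LinearMap.range (T : E →ₗ[ℂ] F)).topologicalClosure).adjoint_eq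

end Aux

variable {H K : Type*} [NormedAddCommGroup H] [InnerProductSpace ℂ H] [CompleteSpace H]
  [NormedAddCommGroup K] [InnerProductSpace ℂ K] [CompleteSpace K]

set_option maxHeartbeats 1000000 in
theorem stmt10 (A B : H →L[ℂ] K) (Ad Bd : K →L[ℂ] H)
    (hA : IsClosed (LinearMap.range (A : H →ₗ[ℂ] K) : Set K)) (hB : IsClosed (LinearMap.range (B : H →ₗ[ℂ] K) : Set K))
    (hAd : IsMPInv A Ad) (hBd : IsMPInv B Bd) :
    (LinearMap.range (A : H →ₗ[ℂ] K) ≤ LinearMap.range (B : H →ₗ[ℂ] K) ∧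
     LinearMap.range (adjoint A : K →ₗ[ℂ] H) ≤ LinearMap.range (adjoint B : K →ₗ[ℂ] H) ∧
     A ∘L ((adjoint A) ∘L A) = A ∘L ((adjoint B) ∘L A)) ↔
    (∃ (Qt : H →L[ℂ] H) (Q : K →L[ℂ] K),
      Qt ∘L Qt = Qt ∧ Q ∘L Q = Q ∧ Ad = Qt ∘L Bd ∧ Ad = Bd ∘L Q) := by
  obtain ⟨hA1, hA2, hA3⟩ := hAd
  obtain ⟨hB1, hB2, hB3⟩ := hBd
  have AdPa : Ad ∘L projCR A = Ad := by rw [← hA1]; exact hA3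
  have PasAd : projCR (adjoint A) ∘L Ad = Ad := by rw [← hA2]; exact hA3
  have BdPb : Bd ∘L projCR B = Bd := by rw [← hB1]; exact hB3
  have PbsBd : projCR (adjoint B) ∘L Bd = Bd := by rw [← hB2]; exact hB3
  have paA : projCR A ∘L A = A := projCR_comp A
  have pasAs : projCR (adjoint A) ∘L adjoint A = adjoint A := projCR_comp _
  have AsPa : adjoint A ∘L projCR A = adjoint A := by
    have h := congrArg adjoint paA
    rwa [adjoint_comp, projCR_adjoint] at h
  have APas : A ∘L projCR (adjoint A) = A := by
    calc A ∘L projCR (adjoint A) = A ∘L (Ad ∘L A) := by rw [hA2]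
      _ = (A ∘L Ad) ∘L A := rfl
      _ = projCR A ∘L A := by rw [hA1]
      _ = A := paA
  constructor
  · rintro ⟨d1, d2, d3⟩
    have pbpa : projCR B ∘L projCR A = projCR A := projCR_comp_projCR d1
    have papb : projCR A ∘L projCR B = projCR A := by
      have h := congrArg adjoint pbpa
      rwa [adjoint_comp, projCR_adjoint, projCR_adjoint] at h
    have pbspas : projCR (adjoint B) ∘L projCR (adjoint A) = projCR (adjoint A) :=
      projCR_comp_projCR d2
    have sand_star : projCR (adjoint A) ∘L (adjoint B ∘L projCR A) = adjoint A := by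
      calc projCR (adjoint A) ∘L (adjoint B ∘L projCR A)
          = (Ad ∘L A) ∘L (adjoint B ∘L (A ∘L Ad)) := by rw [hA1, hA2]
        _ = Ad ∘L ((A ∘L (adjoint B ∘L A)) ∘L Ad) := rfl
        _ = Ad ∘L ((A ∘L (adjoint A ∘L A)) ∘L Ad) := by rw [d3]
        _ = (Ad ∘L A) ∘L (adjoint A ∘L (A ∘L Ad)) := rfl
        _ = projCR (adjoint A) ∘L (adjoint A ∘L projCR A) := by rw [hA1, hA2]
        _ = (projCR (adjoint A) ∘L adjoint A) ∘L projCR A := rfl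
        _ = adjoint A := by rw [pasAs, AsPa]
    have sand : (projCR A ∘L B) ∘L projCR (adjoint A) = A := by
      have h := congrArg adjoint sand_star
      rwa [adjoint_comp, adjoint_comp, projCR_adjoint, projCR_adjoint, adjoint_adjoint,
        adjoint_adjoint] at h
    have keyAd : (Ad ∘L B) ∘L Ad = Ad := by
      calc (Ad ∘L B) ∘L Ad
          = ((Ad ∘L projCR A) ∘L B) ∘L (projCR (adjoint A) ∘L Ad) := by rw [AdPa, PasAd]
        _ = Ad ∘L (((projCR A ∘L B) ∘L projCR (adjoint A)) ∘L Ad) := rfl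
        _ = Ad ∘L (A ∘L Ad) := by rw [sand]
        _ = Ad := hA3
    refine ⟨Ad ∘L B, B ∘L Ad, ?_, ?_, ?_, ?_⟩
    · calc (Ad ∘L B) ∘L (Ad ∘L B) = ((Ad ∘L B) ∘L Ad) ∘L B := rfl
        _ = Ad ∘L B := by rw [keyAd]
    · calc (B ∘L Ad) ∘L (B ∘L Ad) = B ∘L ((Ad ∘L B) ∘L Ad) := rfl
        _ = B ∘L Ad := by rw [keyAd]
    · calc Ad = Ad ∘L projCR A := AdPa.symm
        _ = Ad ∘L (projCR A ∘L projCR B) := by rw [papb]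
        _ = (Ad ∘L projCR A) ∘L projCR B := rfl
        _ = Ad ∘L projCR B := by rw [AdPa]
        _ = Ad ∘L (B ∘L Bd) := by rw [hB1]
        _ = (Ad ∘L B) ∘L Bd := rfl
    · calc Ad = projCR (adjoint A) ∘L Ad := PasAd.symm
        _ = (projCR (adjoint B) ∘L projCR (adjoint A)) ∘L Ad := by rw [pbspas]
        _ = projCR (adjoint B) ∘L (projCR (adjoint A) ∘L Ad) := rfl
        _ = projCR (adjoint B) ∘L Ad := by rw [PasAd]
        _ = (Bd ∘L B) ∘L Ad := by rw [hB2]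
        _ = Bd ∘L (B ∘L Ad) := rfl
  · rintro ⟨Qt, Q, hQt, hQ, e1, e2⟩
    have hBc : (LinearMap.range (B : H →ₗ[ℂ] K)).topologicalClosure = LinearMap.range (B : H →ₗ[ℂ] K) :=
      le_antisymm (Submodule.topologicalClosure_minimal _ le_rfl hB)
        (Submodule.le_topologicalClosure _)
    have QtAd : Qt ∘L Ad = Ad := by
      calc Qt ∘L Ad = Qt ∘L (Qt ∘L Bd) := by rw [← e1]
        _ = (Qt ∘L Qt) ∘L Bd := rfl
        _ = Qt ∘L Bd := by rw [hQt]
        _ = Ad := e1.symm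
    have AdBAd : (Ad ∘L B) ∘L Ad = Ad := by
      calc (Ad ∘L B) ∘L Ad = ((Qt ∘L Bd) ∘L B) ∘L (Bd ∘L Q) := by rw [← e1, ← e2]
        _ = Qt ∘L ((Bd ∘L (B ∘L Bd)) ∘L Q) := rfl
        _ = Qt ∘L (Bd ∘L Q) := by rw [hB3]
        _ = Qt ∘L Ad := by rw [← e2]
        _ = Ad := QtAd
    have sand : (projCR A ∘L B) ∘L projCR (adjoint A) = A := by
      calc (projCR A ∘L B) ∘L projCR (adjoint A)
          = ((A ∘L Ad) ∘L B) ∘L (Ad ∘L A) := by rw [hA1, hA2]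
        _ = (A ∘L ((Ad ∘L B) ∘L Ad)) ∘L A := rfl
        _ = (A ∘L Ad) ∘L A := by rw [AdBAd]
        _ = projCR A ∘L A := by rw [hA1]
        _ = A := paA
    have sand_star : projCR (adjoint A) ∘L (adjoint B ∘L projCR A) = adjoint A := by
      have h := congrArg adjoint sand
      rwa [adjoint_comp, adjoint_comp, projCR_adjoint, projCR_adjoint] at h
    refine ⟨?_, ?_, ?_⟩
    · -- range A ≤ range B
      rintro y ⟨x, rfl⟩
      have pafac : projCR A = (projCR B ∘L adjoint Bd) ∘L (adjoint Qt ∘L adjoint A) := by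
        calc projCR A = adjoint (projCR A) := (projCR_adjoint A).symm
          _ = adjoint (A ∘L Ad) := by rw [hA1]
          _ = adjoint Ad ∘L adjoint A := adjoint_comp _ _
          _ = adjoint (Qt ∘L Bd) ∘L adjoint A := by rw [← e1]
          _ = (adjoint Bd ∘L adjoint Qt) ∘L adjoint A := by rw [adjoint_comp]
          _ = ((projCR B ∘L adjoint Bd) ∘L adjoint Qt) ∘L adjoint A := by
              have h := congrArg adjoint BdPb
              rw [adjoint_comp, projCR_adjoint] at h
              rw [h]
      have e : A = (projCR B ∘L adjoint Bd) ∘L ((adjoint Qt ∘L adjoint A) ∘L A) := by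
        calc A = projCR A ∘L A := paA.symm
          _ = ((projCR B ∘L adjoint Bd) ∘L (adjoint Qt ∘L adjoint A)) ∘L A := by rw [pafac]
          _ = (projCR B ∘L adjoint Bd) ∘L ((adjoint Qt ∘L adjoint A) ∘L A) := rfl
      have hx := ContinuousLinearMap.ext_iff.mp e x
      rw [ContinuousLinearMap.coe_coe, hx]
      have hmem : projCR B ((adjoint Bd) (((adjoint Qt ∘L adjoint A) ∘L A) x)) ∈
          LinearMap.range (B : H →ₗ[ℂ] K) := by
        rw [← hBc]; exact projCR_apply_mem B _
      exact hmem
    · -- range A* ≤ range B*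
      rintro y ⟨x, rfl⟩
      have pbsfac : projCR (adjoint B) = adjoint B ∘L adjoint Bd := by
        calc projCR (adjoint B) = adjoint (projCR (adjoint B)) := (projCR_adjoint _).symm
          _ = adjoint (Bd ∘L B) := by rw [hB2]
          _ = adjoint B ∘L adjoint Bd := adjoint_comp _ _
      have eAd : Ad = adjoint B ∘L ((adjoint Bd ∘L Bd) ∘L Q) := by
        calc Ad = Bd ∘L Q := e2
          _ = (projCR (adjoint B) ∘L Bd) ∘L Q := by rw [PbsBd]
          _ = ((adjoint B ∘L adjoint Bd) ∘L Bd) ∘L Q := by rw [pbsfac]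
          _ = adjoint B ∘L ((adjoint Bd ∘L Bd) ∘L Q) := rfl
      have e : adjoint A =
          adjoint B ∘L (((adjoint Bd ∘L Bd) ∘L Q) ∘L (A ∘L adjoint A)) := by
        calc adjoint A = projCR (adjoint A) ∘L adjoint A := pasAs.symm
          _ = (Ad ∘L A) ∘L adjoint A := by rw [hA2]
          _ = Ad ∘L (A ∘L adjoint A) := rfl
          _ = (adjoint B ∘L ((adjoint Bd ∘L Bd) ∘L Q)) ∘L (A ∘L adjoint A) := by rw [← eAd]
          _ = adjoint B ∘L (((adjoint Bd ∘L Bd) ∘L Q) ∘L (A ∘L adjoint A)) := rfl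
      exact ⟨(((adjoint Bd ∘L Bd) ∘L Q) ∘L (A ∘L adjoint A)) x,
        (ContinuousLinearMap.ext_iff.mp e x).symm⟩
    · -- A A* A = A B* A
      calc A ∘L (adjoint A ∘L A)
          = A ∘L ((projCR (adjoint A) ∘L (adjoint B ∘L projCR A)) ∘L A) := by rw [sand_star]
        _ = (A ∘L projCR (adjoint A)) ∘L (adjoint B ∘L (projCR A ∘L A)) := rfl
        _ = A ∘L (adjoint B ∘L A) := by rw [APas, paA]
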